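/- Let $S$ be a compact subset of $\mathbb{R}^2$, and suppose $x \in \partial(\mathrm{conv}(S)) \setminus S$, where $\mathrm{conv}(S)$ is the convex hull of $S$ and $\partial$ denotes the topological boundary. Then there exist $u, v \in S$ with $u \neq v$ such that $x$ is contained in the line segment connecting $u$ and $v$, and moreover $S$ lies completely on one side of the line passing through $u$ and $v$; that is, there is a closed half-plane bounded by the affine line through $u$ and $v$ that contains $S$. -/

import Mathlib

open Function in
lemma sum_extend_zero {ι κ M : Type*} [Fintype ι] [Fintype κ] [AddCommMonoid M]
    (e : ι ↪ κ) (f : ι → M) :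
    ∑ j : κ, Function.extend e f 0 j = ∑ i : ι, f i := by
  classical
  have h1 : ∑ j ∈ Finset.univ.map e, Function.extend e f 0 j = ∑ i : ι, f i := by
    rw [Finset.sum_map]
    exact Finset.sum_congr rfl fun i _ => e.injective.extend_apply _ _ _
  rw [← h1]
  refine (Finset.sum_subset (Finset.subset_univ _) fun j _ hj => ?_).symm
  have : ¬∃ i, e i = j := by simpa using hj
  simp [Function.extend_apply' _ _ _ this]

lemma isCompact_convexHull_of_isCompact {E : Type*} [NormedAddCommGroup E] [NormedSpace ℝ E]
    [FiniteDimensional ℝ E] {S : Set E} (hS : IsCompact S) : IsCompact (convexHull ℝ S) := by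
  classical
  rcases S.eq_empty_or_nonempty with rfl | ⟨s₀, hs₀⟩
  · simp
  obtain ⟨n, hn⟩ : ∃ n : ℕ, Module.finrank ℝ E + 1 = n := ⟨_, rfl⟩
  have hf : Continuous fun p : (Fin n → ℝ) × (Fin n → E) => ∑ i, p.1 i • p.2 i :=
    continuous_finset_sum _ fun i _ =>
      ((continuous_apply i).comp continuous_fst).smul ((continuous_apply i).comp continuous_snd)
  have hK : IsCompact ((stdSimplex ℝ (Fin n)) ×ˢ (Set.pi Set.univ fun _ : Fin n => S)) :=
    (isCompact_stdSimplex (𝕜 := ℝ) (ι := Fin n)).prod (isCompact_univ_pi fun _ => hS)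
  have himage : convexHull ℝ S =
      (fun p : (Fin n → ℝ) × (Fin n → E) => ∑ i, p.1 i • p.2 i) ''
        ((stdSimplex ℝ (Fin n)) ×ˢ (Set.pi Set.univ fun _ : Fin n => S)) := by
    apply Set.Subset.antisymm
    · intro x hx
      obtain ⟨ι, hι, z, w, hzS, hai, hw0, hw1, hx⟩ := eq_pos_convex_span_of_mem_convexHull hx
      have hcard : Fintype.card ι ≤ n := by
        rw [← hn]
        exact hai.card_le_finrank_succ.trans (Nat.add_le_add_right (Submodule.finrank_le _) 1)
      have e : ι ↪ Fin n := (Fintype.equivFin ι).toEmbedding.trans (Fin.castLEEmb hcard)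
      refine ⟨(Function.extend e w 0, Function.extend e z fun _ => s₀), ⟨⟨?_, ?_⟩, ?_⟩, ?_⟩
      · intro j
        dsimp only
        by_cases h : ∃ i, e i = j
        · obtain ⟨i, rfl⟩ := h
          rw [e.injective.extend_apply]
          exact (hw0 i).le
        · rw [Function.extend_apply' _ _ _ h]
          exact le_rfl
      · dsimp only
        rw [sum_extend_zero e w]; exact hw1
      · intro j _
        dsimp only
        by_cases h : ∃ i, e i = j
        · obtain ⟨i, rfl⟩ := h
          rw [e.injective.extend_apply]
          exact hzS (Set.mem_range_self _)
        · rw [Function.extend_apply' _ _ _ h]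
          exact hs₀
      · dsimp only
        calc ∑ j : Fin n, Function.extend e w 0 j • Function.extend e z (fun _ => s₀) j
            = ∑ j : Fin n, Function.extend e (fun i => w i • z i) 0 j := by
              refine Finset.sum_congr rfl fun j _ => ?_
              by_cases h : ∃ i, e i = j
              · obtain ⟨i, rfl⟩ := h
                rw [e.injective.extend_apply, e.injective.extend_apply, e.injective.extend_apply]
              · rw [Function.extend_apply' _ _ _ h, Function.extend_apply' _ _ _ h,
                  Function.extend_apply' _ _ _ h]
                simp
          _ = ∑ i : ι, w i • z i := sum_extend_zero e _
          _ = x := hx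
    · rintro _ ⟨⟨w, z⟩, ⟨⟨hw0, hw1⟩, hz⟩, rfl⟩
      exact mem_convexHull_of_exists_fintype w z hw0 hw1 (fun i => hz i (Set.mem_univ i)) rfl
  rw [himage]; exact hK.image hf

open scoped RealInnerProductSpace

lemma convex_combo_eq {α β γ : ℝ} (h : α ≠ β) :
    (1 - (γ - α) / (β - α)) * α + ((γ - α) / (β - α)) * β = γ := by
  have hne : β - α ≠ 0 := sub_ne_zero.mpr (Ne.symm h)
  field_simp
  ring

theorem boundary_convexHull_point_on_supporting_segment
    (S : Set (EuclideanSpace ℝ (Fin 2))) (hS : IsCompact S)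
    (x : EuclideanSpace ℝ (Fin 2))
    (hx : x ∈ frontier (convexHull ℝ S) \ S) :
    ∃ u ∈ S, ∃ v ∈ S, u ≠ v ∧ x ∈ segment ℝ u v ∧
      ∃ φ : EuclideanSpace ℝ (Fin 2) →ₗ[ℝ] ℝ, φ ≠ 0 ∧ φ u = φ v ∧ ∀ s ∈ S, φ s ≤ φ u := by
  classical
  obtain ⟨hxf, hxS⟩ := hx
  have hKc : IsCompact (convexHull ℝ S) := isCompact_convexHull_of_isCompact hS
  have hxK : x ∈ convexHull ℝ S := by
    have h1 := frontier_subset_closure hxf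
    rwa [hKc.isClosed.closure_eq] at h1
  have hK : Convex ℝ (convexHull ℝ S) := convex_convexHull ℝ S
  -- supporting functional
  obtain ⟨φ, a, hφa, hφle⟩ :
      ∃ (φ : EuclideanSpace ℝ (Fin 2) →L[ℝ] ℝ) (a : EuclideanSpace ℝ (Fin 2)),
        φ a ≠ 0 ∧ ∀ y ∈ convexHull ℝ S, φ y ≤ φ x := by
    by_cases hint : (interior (convexHull ℝ S)).Nonempty
    · have hxint : x ∉ interior (convexHull ℝ S) := hxf.2
      obtain ⟨f, hf⟩ := geometric_hahn_banach_open_point hK.interior isOpen_interior hxint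
      obtain ⟨a0, ha0⟩ := hint
      refine ⟨f, x - a0, ?_, ?_⟩
      · have h3 := hf a0 ha0
        rw [map_sub]
        intro h4
        have : f x = f a0 := by linarith [sub_eq_zero.mp h4]
        linarith
      · intro y hy
        have h1 : Filter.Tendsto (fun t : ℝ => (1 - t) • a0 + t • y)
            (nhdsWithin 1 (Set.Iio 1)) (nhds y) := by
          have hc : Continuous fun t : ℝ => (1 - t) • a0 + t • y := by
            exact ((continuous_const.sub continuous_id).smul continuous_const).add
              (continuous_id.smul continuous_const)
          have h2 := hc.tendsto 1
          simpa using h2.mono_left nhdsWithin_le_nhds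
        have h3 : ∀ᶠ t in nhdsWithin (1:ℝ) (Set.Iio 1),
            f ((1 - t) • a0 + t • y) ≤ f x := by
          filter_upwards [Ioo_mem_nhdsLT_of_mem (show (1:ℝ) ∈ Set.Ioc 0 1 by norm_num)]
            with t ht
          exact (hf _ (hK.combo_interior_closure_mem_interior ha0 (subset_closure hy)
            (by linarith [ht.2]) ht.1.le (by ring))).le
        exact le_of_tendsto ((f.continuous.tendsto y).comp h1) h3
    · have hspan : affineSpan ℝ (convexHull ℝ S) ≠ ⊤ := fun h =>
        hint (hK.interior_nonempty_iff_affineSpan_eq_top.mpr h)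
      have hxA : x ∈ affineSpan ℝ (convexHull ℝ S) := subset_affineSpan ℝ _ hxK
      have hdir : (affineSpan ℝ (convexHull ℝ S)).direction ≠ ⊤ := by
        intro h
        exact hspan ((AffineSubspace.direction_eq_top_iff_of_nonempty ⟨x, hxA⟩).mp h)
      have hobot : (affineSpan ℝ (convexHull ℝ S)).directionᗮ ≠ ⊥ := by
        simpa [Submodule.orthogonal_eq_bot_iff] using hdir
      obtain ⟨wv, hwv, hwv0⟩ := Submodule.exists_mem_ne_zero_of_ne_bot hobot
      refine ⟨innerSL ℝ wv, wv, ?_, ?_⟩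
      · intro h
        exact hwv0 (inner_self_eq_zero.mp h)
      · intro y hy
        have hyA : y ∈ affineSpan ℝ (convexHull ℝ S) := subset_affineSpan ℝ _ hy
        have hmem : y -ᵥ x ∈ (affineSpan ℝ (convexHull ℝ S)).direction :=
          AffineSubspace.vsub_mem_direction hyA hxA
        have h0 : ⟪y - x, wv⟫ = 0 := (Submodule.mem_orthogonal _ _).mp hwv _ hmem
        have h1 : ⟪wv, y - x⟫ = 0 := by rwa [real_inner_comm]
        have : (innerSL ℝ wv) y - (innerSL ℝ wv) x = 0 := by
          simpa [inner_sub_right] using h1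
        linarith
  have hφS : ∀ s ∈ S, φ s ≤ φ x := fun s hs => hφle s (subset_convexHull ℝ S hs)
  -- x is in the hull of the touching set T
  set T : Set (EuclideanSpace ℝ (Fin 2)) := {s ∈ S | φ s = φ x} with hT
  have hxT : x ∈ convexHull ℝ T := by
    obtain ⟨ι, hι, z, w, hzS, hai, hw0, hw1, hxe⟩ := eq_pos_convex_span_of_mem_convexHull hxK
    have hφz : ∀ i, φ (z i) = φ x := by
      by_contra hcon
      push_neg at hcon
      obtain ⟨i0, hi0⟩ := hcon
      have hzmem : ∀ i, z i ∈ S := fun i => hzS (Set.mem_range_self i)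
      have hlt : φ (z i0) < φ x := lt_of_le_of_ne (hφS _ (hzmem i0)) hi0
      have hcontr : φ x < φ x := by
        calc φ x = φ (∑ i, w i • z i) := by rw [hxe]
          _ = ∑ i, w i * φ (z i) := by simp
          _ < ∑ i, w i * φ x := by
              refine Finset.sum_lt_sum (fun i _ =>
                mul_le_mul_of_nonneg_left (hφS _ (hzmem i)) (hw0 i).le) ?_
              exact ⟨i0, Finset.mem_univ _, mul_lt_mul_of_pos_left hlt (hw0 i0)⟩
          _ = φ x := by rw [← Finset.sum_mul, hw1, one_mul]
      exact lt_irrefl _ hcontr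
    exact mem_convexHull_of_exists_fintype w z (fun i => (hw0 i).le) hw1
      (fun i => ⟨hzS (Set.mem_range_self i), hφz i⟩) hxe
  have hTsub : T ⊆ S := Set.sep_subset _ _
  have hTc : IsCompact T := by
    have : T = S ∩ φ ⁻¹' {φ x} := rfl
    rw [this]
    exact hS.inter_right (isClosed_singleton.preimage φ.continuous)
  have hTne : T.Nonempty := by
    by_contra h
    rw [Set.not_nonempty_iff_eq_empty] at h
    rw [h, convexHull_empty] at hxT
    exact hxT
  -- a direction along the supporting line
  obtain ⟨d, hd0, hdφ⟩ : ∃ d : EuclideanSpace ℝ (Fin 2), d ≠ 0 ∧ φ d = 0 := by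
    by_contra h
    push_neg at h
    have hinj : Function.Injective φ := by
      intro p q hpq
      by_contra hne
      exact h (p - q) (sub_ne_zero.mpr hne) (by rw [map_sub, hpq, sub_self])
    have h1 := LinearMap.finrank_le_finrank_of_injective
      (f := (φ : EuclideanSpace ℝ (Fin 2) →ₗ[ℝ] ℝ)) hinj
    rw [finrank_euclideanSpace_fin, Module.finrank_self] at h1
    omega
  have hkerspan : LinearMap.ker (φ : EuclideanSpace ℝ (Fin 2) →ₗ[ℝ] ℝ)
      = Submodule.span ℝ {d} := by
    have hle : Submodule.span ℝ {d} ≤ LinearMap.ker (φ : EuclideanSpace ℝ (Fin 2) →ₗ[ℝ] ℝ) := by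
      rw [Submodule.span_le, Set.singleton_subset_iff]
      exact LinearMap.mem_ker.mpr hdφ
    have hker1 : Module.finrank ℝ
        (LinearMap.ker (φ : EuclideanSpace ℝ (Fin 2) →ₗ[ℝ] ℝ)) ≤ 1 := by
      have hkertop : LinearMap.ker (φ : EuclideanSpace ℝ (Fin 2) →ₗ[ℝ] ℝ) < ⊤ := by
        refine lt_top_iff_ne_top.mpr fun h => hφa ?_
        have : a ∈ LinearMap.ker (φ : EuclideanSpace ℝ (Fin 2) →ₗ[ℝ] ℝ) := h ▸ trivial
        exact LinearMap.mem_ker.mp this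
      have h2 := Submodule.finrank_lt hkertop.ne
      rw [finrank_euclideanSpace_fin] at h2
      omega
    exact (Submodule.eq_of_le_of_finrank_le hle
      (by rw [finrank_span_singleton hd0]; exact hker1)).symm
  have hinj2 : ∀ p q : EuclideanSpace ℝ (Fin 2), φ p = φ q → ⟪d, p⟫ = ⟪d, q⟫ → p = q := by
    intro p q h1 h2
    have hm : p - q ∈ LinearMap.ker (φ : EuclideanSpace ℝ (Fin 2) →ₗ[ℝ] ℝ) := by
      rw [LinearMap.mem_ker]
      show φ (p - q) = 0
      rw [map_sub, h1, sub_self]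
    rw [hkerspan, Submodule.mem_span_singleton] at hm
    obtain ⟨c, hc⟩ := hm
    have h3 : ⟪d, p - q⟫ = 0 := by rw [inner_sub_right, h2, sub_self]
    rw [← hc, real_inner_smul_right] at h3
    have hc0 : c = 0 := by
      rcases mul_eq_zero.mp h3 with h | h
      · exact h
      · exact absurd h (inner_self_ne_zero.mpr hd0)
    have : p - q = 0 := by rw [← hc, hc0, zero_smul]
    exact sub_eq_zero.mp this
  -- extreme points of T along direction d
  have hcont : Continuous fun y : EuclideanSpace ℝ (Fin 2) => ⟪d, y⟫ := (innerSL ℝ d).continuous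
  obtain ⟨u, huT, hu⟩ := hTc.exists_isMinOn hTne hcont.continuousOn
  obtain ⟨v, hvT, hv⟩ := hTc.exists_isMaxOn hTne hcont.continuousOn
  have hu' : ∀ y ∈ T, ⟪d, u⟫ ≤ ⟪d, y⟫ := fun y hy => hu hy
  have hv' : ∀ y ∈ T, ⟪d, y⟫ ≤ ⟪d, v⟫ := fun y hy => hv hy
  have hhull : convexHull ℝ T ⊆
      {y : EuclideanSpace ℝ (Fin 2) | ⟪d, u⟫ ≤ ⟪d, y⟫ ∧ ⟪d, y⟫ ≤ ⟪d, v⟫} := by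
    refine convexHull_min (fun y hy => ?_) ?_
    · exact ⟨hu' y hy, hv' y hy⟩
    have heq : {y : EuclideanSpace ℝ (Fin 2) | ⟪d, u⟫ ≤ ⟪d, y⟫ ∧ ⟪d, y⟫ ≤ ⟪d, v⟫}
        = (innerSL ℝ d : EuclideanSpace ℝ (Fin 2) →ₗ[ℝ] ℝ) ⁻¹' (Set.Icc ⟪d, u⟫ ⟪d, v⟫) := rfl
    rw [heq]
    exact (convex_Icc _ _).linear_preimage _
  obtain ⟨hxu, hxv⟩ := hhull hxT
  have huv : u ≠ v := by
    intro huveq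
    have hTu : T ⊆ {u} := by
      intro y hy
      have h1 : φ y = φ u := by rw [hy.2, huT.2]
      have h2 : ⟪d, y⟫ = ⟪d, u⟫ := le_antisymm (huveq ▸ hv' y hy) (hu' y hy)
      exact hinj2 y u h1 h2
    have : x ∈ ({u} : Set (EuclideanSpace ℝ (Fin 2))) := by
      have := convexHull_mono hTu hxT
      rwa [convexHull_singleton] at this
    exact hxS (this ▸ hTsub huT)
  have hψuv : ⟪d, u⟫ < ⟪d, v⟫ := by
    rcases lt_or_eq_of_le (hu' v hvT) with h | h
    · exact h
    · exact absurd (hinj2 u v (by rw [huT.2, hvT.2]) h) huv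
  set t : ℝ := (⟪d, x⟫ - ⟪d, u⟫) / (⟪d, v⟫ - ⟪d, u⟫) with htdef
  have ht0 : 0 ≤ t := div_nonneg (by linarith) (by linarith)
  have ht1 : t ≤ 1 := (div_le_one (by linarith)).mpr (by linarith)
  have hpt : (1 - t) • u + t • v = x := by
    apply hinj2
    · show φ ((1 - t) • u + t • v) = φ x
      rw [map_add, map_smul, map_smul, huT.2, hvT.2]
      simp only [smul_eq_mul]
      ring
    · rw [inner_add_right, real_inner_smul_right, real_inner_smul_right, htdef]
      exact convex_combo_eq (ne_of_lt hψuv)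
  refine ⟨u, hTsub huT, v, hTsub hvT, huv,
    ⟨1 - t, t, by linarith, ht0, by ring, hpt⟩,
    (φ : EuclideanSpace ℝ (Fin 2) →ₗ[ℝ] ℝ), ?_, show φ u = φ v by rw [huT.2, hvT.2], ?_⟩
  · intro h
    exact hφa (by simpa using LinearMap.congr_fun h a)
  · intro s hs
    show φ s ≤ φ u
    calc φ s ≤ φ x := hφS s hs
      _ = φ u := huT.2.symm
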